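/- Fix an integer ℓ > 2, a path Q with ℓ vertices in K_n with endpoint pair f, and p = p(n) with pn = ω(n^{1/(ℓ-1)}). Define Δ* = Σ_P ℙ[P ⊆ G(n,p) | Q ⊆ G(n,p)], where the sum ranges over copies P of P_ℓ in K_n with endpoints f satisfying 1 ≤ |E(P) ∩ E(Q)| < ℓ−1. Then Δ* ≤ 2^{ℓ-1} · n^{ℓ-2} p^{ℓ-1} / (np). -/

import Mathlib

open scoped Classical

/-- The edge set of the walk `w 0, w 1, …, w (ℓ-1)`. -/
def pathEdges (n ℓ : ℕ) (w : ℕ → Fin n) : Finset (Sym2 (Fin n)) :=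
  (Finset.range (ℓ - 1)).image (fun i => s(w i, w (i + 1)))

/-- `w` labels a copy of the path `P_ℓ` in `K_n` with endpoint pair `f`. -/
def isPathCopy (n ℓ : ℕ) (f : Sym2 (Fin n)) (w : ℕ → Fin n) : Prop :=
  Set.InjOn w (Set.Iio ℓ) ∧ s(w 0, w (ℓ - 1)) = f


section helpers
variable {α : Type*}

lemma sym2_det {x y c d : α} (h : s(x,y) = s(c,d)) (hx : x = c) : y = d := by
  rw [Sym2.eq_iff] at h
  rcases h with ⟨_, hy⟩ | ⟨h1, h2⟩
  · exact hy
  · rw [h2, ← hx, h1]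

lemma sym2_mem {x y c d : α} (h : s(x,y) = s(c,d)) : x = c ∨ x = d := by
  rw [Sym2.eq_iff] at h; tauto

lemma sym2_det' {x y c d : α} (h : s(x,y) = s(c,d)) (hx : x ≠ c) : x = d ∧ y = c := by
  rw [Sym2.eq_iff] at h; tauto

lemma det_pair {x y x' y' c d : α} (h : s(x,y) = s(c,d)) (h' : s(x',y') = s(c,d))
    (hb : (x = c) ↔ (x' = c)) : x = x' ∧ y = y' := by
  by_cases hx : x = c
  · have hx' := hb.1 hx
    exact ⟨hx.trans hx'.symm, (sym2_det h hx).trans (sym2_det h' hx').symm⟩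
  · have hx' : x' ≠ c := fun hh => hx (hb.2 hh)
    obtain ⟨h1, h2⟩ := sym2_det' h hx
    obtain ⟨h1', h2'⟩ := sym2_det' h' hx'
    exact ⟨h1.trans h1'.symm, h2.trans h2'.symm⟩

lemma ite_bool_eq {P Q : Prop} [Decidable P] [Decidable Q]
    (h : (if P then true else false) = (if Q then true else false)) : P ↔ Q := by
  by_cases hP : P <;> by_cases hQ : Q <;> simp [hP, hQ] at h ⊢ <;> tauto

lemma sym2_exists (z : Sym2 α) : ∃ pr : α × α, z = s(pr.1, pr.2) := by
  induction z using Sym2.ind with | _ x y => exact ⟨(x, y), rfl⟩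

noncomputable def sym2Fst (z : Sym2 α) : α := (Classical.choose (sym2_exists z)).1
noncomputable def sym2Snd (z : Sym2 α) : α := (Classical.choose (sym2_exists z)).2

lemma sym2_pick_spec (z : Sym2 α) : z = s(sym2Fst z, sym2Snd z) :=
  Classical.choose_spec (sym2_exists z)

end helpers

lemma card_le_of_agree {n ℓ : ℕ} (s : Finset (Fin ℓ → Fin n)) (F : Finset (Fin ℓ))
    (h : ∀ v ∈ s, ∀ v' ∈ s, (∀ i ∈ F, v i = v' i) → v = v') : s.card ≤ n ^ F.card := by
  calc s.card ≤ (Finset.univ : Finset ({x // x ∈ F} → Fin n)).card := by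
        apply Finset.card_le_card_of_injOn (fun v => fun i : {x // x ∈ F} => v i)
          (fun a _ => Finset.mem_univ _)
        intro v hv v' hv' he
        exact h v hv v' hv' (fun i hi => congrFun he ⟨i, hi⟩)
    _ = n ^ F.card := by
        simp [Finset.card_univ, Fintype.card_fun, Fintype.card_coe]

lemma card_le_of_agree2 {n ℓ : ℕ} (s : Finset (Fin ℓ → Fin n)) (F : Finset (Fin ℓ))
    (β : (Fin ℓ → Fin n) → Bool)
    (h : ∀ v ∈ s, ∀ v' ∈ s, β v = β v' → (∀ i ∈ F, v i = v' i) → v = v') :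
    s.card ≤ 2 * n ^ F.card := by
  calc s.card ≤ (Finset.univ : Finset (Bool × ({x // x ∈ F} → Fin n))).card := by
        apply Finset.card_le_card_of_injOn (fun v => (β v, fun i : {x // x ∈ F} => v i))
          (fun a _ => Finset.mem_univ _)
        intro v hv v' hv' he
        have h1 : β v = β v' := congrArg Prod.fst he
        have h2 := congrArg Prod.snd he
        exact h v hv v' hv' h1 (fun i hi => congrFun h2 ⟨i, hi⟩)
    _ = 2 * n ^ F.card := by
        simp [Finset.card_univ, Fintype.card_fun, Fintype.card_coe]

lemma shift_card (ℓ : ℕ) (J : Finset ℕ) (hJ : J ⊆ Finset.range (ℓ-1)) (hcard : J.card ≤ ℓ-2) :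
    J.card ≤ ((J ∪ J.image (· + 1)) \ {0, ℓ-1}).card := by
  apply Finset.card_le_card_of_injOn (fun j => if Finset.range (j+1) ⊆ J then j+1 else j)
  · intro j hj
    simp only [Finset.mem_coe, Finset.mem_sdiff, Finset.mem_union, Finset.mem_insert, Finset.mem_singleton]
    split_ifs with hc
    · refine ⟨Or.inr (Finset.mem_image.2 ⟨j, hj, rfl⟩), ?_⟩
      have hle := Finset.card_le_card hc
      rw [Finset.card_range] at hle
      have hjr := hJ hj; rw [Finset.mem_range] at hjr
      rintro (h | h)
      · exact h
      · omega
    · have hjr := hJ hj; rw [Finset.mem_range] at hjr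
      refine ⟨Or.inl hj, ?_⟩
      rintro (h0 | hl)
      · apply hc
        intro m hm
        rw [Finset.mem_range] at hm
        have : m = 0 := by omega
        rw [this, ← h0]; exact hj
      · omega
  · intro j hj j' hj' hh
    rw [Finset.mem_coe] at hj hj'
    by_cases c : Finset.range (j+1) ⊆ J <;> by_cases c' : Finset.range (j'+1) ⊆ J <;>
      simp only [c, c', if_true, if_false, if_pos, if_neg, not_false_iff] at hh
    · omega
    · exfalso; apply c'
      intro m hm
      rw [Finset.mem_range] at hm
      rcases Nat.lt_succ_iff_lt_or_eq.mp hm with h | h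
      · exact c (Finset.mem_range.2 (by omega))
      · rw [h]; exact hj'
    · exfalso; apply c
      intro m hm
      rw [Finset.mem_range] at hm
      rcases Nat.lt_succ_iff_lt_or_eq.mp hm with h | h
      · exact c' (Finset.mem_range.2 (by omega))
      · rw [h]; exact hj
    · exact hh

section layer2

def vex (n ℓ : ℕ) (h : 0 < ℓ) (v : Fin ℓ → Fin n) : ℕ → Fin n :=
  fun i => if hi : i < ℓ then v ⟨i, hi⟩ else v ⟨0, h⟩

lemma vex_lt {n ℓ : ℕ} (h : 0 < ℓ) (v : Fin ℓ → Fin n) {i : ℕ} (hi : i < ℓ) :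
    vex n ℓ h v i = v ⟨i, hi⟩ := dif_pos hi

lemma mem_pathEdges {n ℓ : ℕ} {w : ℕ → Fin n} {e : Sym2 (Fin n)} :
    e ∈ pathEdges n ℓ w ↔ ∃ i, i < ℓ - 1 ∧ s(w i, w (i+1)) = e := by
  constructor
  · intro h
    rw [pathEdges, Finset.mem_image] at h
    obtain ⟨i, hi, hh⟩ := h
    exact ⟨i, Finset.mem_range.1 hi, hh⟩
  · rintro ⟨i, hi, hh⟩
    rw [pathEdges, Finset.mem_image]
    exact ⟨i, Finset.mem_range.2 hi, hh⟩

noncomputable def epos (n ℓ : ℕ) (e : Sym2 (Fin n)) (w : ℕ → Fin n) : ℕ :=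
  if h : ((Finset.range (ℓ-1)).filter (fun i => s(w i, w (i+1)) = e)).Nonempty
  then ((Finset.range (ℓ-1)).filter (fun i => s(w i, w (i+1)) = e)).min' h else 0

lemma epos_lt {n ℓ : ℕ} (hℓ : 1 < ℓ) (e : Sym2 (Fin n)) (w : ℕ → Fin n) :
    epos n ℓ e w < ℓ - 1 := by
  unfold epos
  split
  · next h =>
      have hm := Finset.min'_mem _ h
      rw [Finset.mem_filter, Finset.mem_range] at hm
      exact hm.1
  · omega

lemma epos_spec {n ℓ : ℕ} {e : Sym2 (Fin n)} {w : ℕ → Fin n} (he : e ∈ pathEdges n ℓ w) :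
    s(w (epos n ℓ e w), w (epos n ℓ e w + 1)) = e := by
  rw [mem_pathEdges] at he
  obtain ⟨i, hi, hie⟩ := he
  have hne : ((Finset.range (ℓ-1)).filter (fun i => s(w i, w (i+1)) = e)).Nonempty :=
    ⟨i, Finset.mem_filter.2 ⟨Finset.mem_range.2 hi, hie⟩⟩
  rw [epos, dif_pos hne]
  have hm := Finset.min'_mem _ hne
  rw [Finset.mem_filter] at hm
  exact hm.2

noncomputable def VSet (n ℓ : ℕ) (h : 0 < ℓ) (f : Sym2 (Fin n)) (I : Finset (Sym2 (Fin n))) :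
    Finset (Fin ℓ → Fin n) :=
  Finset.univ.filter (fun v => isPathCopy n ℓ f (vex n ℓ h v) ∧ I ⊆ pathEdges n ℓ (vex n ℓ h v))

lemma pathEdges_congr {n ℓ : ℕ} {w₁ w₂ : ℕ → Fin n} (h : ∀ i < ℓ, w₁ i = w₂ i) :
    pathEdges n ℓ w₁ = pathEdges n ℓ w₂ := by
  unfold pathEdges
  apply Finset.image_congr
  intro i hi
  rw [Finset.coe_range, Set.mem_Iio] at hi
  show s(w₁ i, w₁ (i+1)) = s(w₂ i, w₂ (i+1))
  rw [h i (by omega), h (i+1) (by omega)]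

lemma isPathCopy_congr {n ℓ : ℕ} {f : Sym2 (Fin n)} {w₁ w₂ : ℕ → Fin n} (h0 : 0 < ℓ)
    (h : ∀ i < ℓ, w₁ i = w₂ i) (hc : isPathCopy n ℓ f w₁) : isPathCopy n ℓ f w₂ := by
  obtain ⟨hinj, hend⟩ := hc
  constructor
  · intro x hx y hy hxy
    rw [Set.mem_Iio] at hx hy
    exact hinj hx hy (by rw [h x hx, h y hy]; exact hxy)
  · rw [← h 0 h0, ← h (ℓ-1) (by omega)]; exact hend

lemma cofin_card {ℓ : ℕ} (D : Finset ℕ) (hD : ∀ m ∈ D, m < ℓ) :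
    ((Finset.univ : Finset (Fin ℓ)) \ D.attachFin hD).card = ℓ - D.card := by
  rw [Finset.card_sdiff_of_subset (Finset.subset_univ _), Finset.card_attachFin, Finset.card_univ,
    Fintype.card_fin]

lemma mem_cofin {ℓ : ℕ} {D : Finset ℕ} {hD : ∀ m ∈ D, m < ℓ} {j : Fin ℓ} :
    j ∈ (Finset.univ : Finset (Fin ℓ)) \ D.attachFin hD ↔ (j : ℕ) ∉ D := by
  simp [Finset.mem_sdiff, Finset.mem_attachFin]

end layer2

section counting

lemma sym2_swap {α : Type*} {x y c d : α} (h : s(x,y) = s(c,d)) : s(y,x) = s(d,c) := by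
  rw [Sym2.eq_swap, h, Sym2.eq_swap]

lemma count1 (n ℓ : ℕ) (hℓ : 2 < ℓ) (h0 : 0 < ℓ) (f : Sym2 (Fin n)) (a b : Fin n)
    (hf : f = s(a, b)) (e : Sym2 (Fin n)) :
    (VSet n ℓ h0 f {e}).card ≤ 4 * n ^ (ℓ-3) + 4 * (ℓ-3) * n ^ (ℓ-4) := by
  obtain ⟨pr, he⟩ := sym2_exists e
  have hmaps : ∀ v ∈ VSet n ℓ h0 f {e},
      (epos n ℓ e (vex n ℓ h0 v),
        if vex n ℓ h0 v (epos n ℓ e (vex n ℓ h0 v)) = pr.1 then true else false) ∈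
        (Finset.range (ℓ-1)) ×ˢ (Finset.univ : Finset Bool) := by
    intro v hv
    rw [Finset.mem_product]
    exact ⟨Finset.mem_range.2 (epos_lt (by omega) _ _), Finset.mem_univ _⟩
  rw [Finset.card_eq_sum_card_fiberwise hmaps]
  have hfib : ∀ q ∈ (Finset.range (ℓ-1)) ×ˢ (Finset.univ : Finset Bool),
      ((VSet n ℓ h0 f {e}).filter (fun v =>
        (epos n ℓ e (vex n ℓ h0 v),
          if vex n ℓ h0 v (epos n ℓ e (vex n ℓ h0 v)) = pr.1 then true else false) = q)).card ≤
      (if q.1 = 0 ∨ q.1 = ℓ-2 then n ^ (ℓ-3) else 2 * n ^ (ℓ-4)) := by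
    rintro ⟨i, o⟩ hq
    rw [Finset.mem_product, Finset.mem_range] at hq
    obtain ⟨hi, -⟩ := hq
    have hE : ∀ v ∈ (VSet n ℓ h0 f {e}).filter (fun v =>
        (epos n ℓ e (vex n ℓ h0 v),
          if vex n ℓ h0 v (epos n ℓ e (vex n ℓ h0 v)) = pr.1 then true else false) = (i, o)),
        s(vex n ℓ h0 v i, vex n ℓ h0 v (i+1)) = s(pr.1, pr.2) ∧
        ((if vex n ℓ h0 v i = pr.1 then true else false) = o) ∧
        s(vex n ℓ h0 v 0, vex n ℓ h0 v (ℓ-1)) = s(a, b) := by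
      intro v hv
      rw [Finset.mem_filter] at hv
      obtain ⟨hvW, hΨ⟩ := hv
      rw [VSet, Finset.mem_filter] at hvW
      obtain ⟨-, ⟨hinj, hend⟩, hsub⟩ := hvW
      have hee : e ∈ pathEdges n ℓ (vex n ℓ h0 v) := hsub (Finset.mem_singleton_self e)
      have hpos : epos n ℓ e (vex n ℓ h0 v) = i := congrArg Prod.fst hΨ
      have hbit := congrArg Prod.snd hΨ
      simp only at hbit
      rw [hpos] at hbit
      have hspec := epos_spec hee
      rw [hpos] at hspec
      exact ⟨hspec.trans he, hbit, hend.trans (by rw [hf])⟩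
    by_cases hc0 : i = 0
    · subst hc0
      rw [if_pos (Or.inl rfl)]
      refine le_trans (card_le_of_agree _ (Finset.univ \ ({0, 1, ℓ-1} : Finset ℕ).attachFin
        (fun m hm => by simp only [Finset.mem_insert, Finset.mem_singleton] at hm; omega)) ?_) ?_
      · intro v hv v' hv' hagree
        obtain ⟨hEv, hBv, hFv⟩ := hE v hv
        obtain ⟨hEv', hBv', hFv'⟩ := hE v' hv'
        have hbb : (vex n ℓ h0 v 0 = pr.1) ↔ (vex n ℓ h0 v' 0 = pr.1) :=
          ite_bool_eq (hBv.trans hBv'.symm)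
        have h01 := det_pair hEv hEv' hbb
        have hbf : (vex n ℓ h0 v 0 = a) ↔ (vex n ℓ h0 v' 0 = a) := by rw [h01.1]
        have h0L := det_pair hFv hFv' hbf
        funext j
        have hjl := j.isLt
        have key : vex n ℓ h0 v (j : ℕ) = vex n ℓ h0 v' (j : ℕ) → v j = v' j := by
          rw [vex_lt h0 v hjl, vex_lt h0 v' hjl]
          intro hh
          simpa [Fin.eta] using hh
        by_cases hj0 : (j : ℕ) = 0
        · exact key (by rw [hj0]; exact h01.1)
        · by_cases hj1 : (j : ℕ) = 1
          · apply key
            rw [hj1]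
            exact h01.2
          · by_cases hjL : (j : ℕ) = ℓ-1
            · exact key (by rw [hjL]; exact h0L.2)
            · exact hagree j (mem_cofin.2 (by
                simp only [Finset.mem_insert, Finset.mem_singleton]
                push_neg
                exact ⟨hj0, hj1, hjL⟩))
      · rw [cofin_card]
        have hcD : ({0, 1, ℓ-1} : Finset ℕ).card = 3 := by
          rw [Finset.card_insert_of_notMem (by
              simp only [Finset.mem_insert, Finset.mem_singleton]; omega),
            Finset.card_insert_of_notMem (by
              simp only [Finset.mem_singleton]; omega),
            Finset.card_singleton]
        rw [hcD]
    · by_cases hcL : i = ℓ-2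
      · subst hcL
        rw [if_pos (Or.inr rfl)]
        refine le_trans (card_le_of_agree _ (Finset.univ \ ({0, ℓ-2, ℓ-1} : Finset ℕ).attachFin
          (fun m hm => by simp only [Finset.mem_insert, Finset.mem_singleton] at hm; omega)) ?_) ?_
        · intro v hv v' hv' hagree
          obtain ⟨hEv, hBv, hFv⟩ := hE v hv
          obtain ⟨hEv', hBv', hFv'⟩ := hE v' hv'
          have hstep : ℓ - 2 + 1 = ℓ - 1 := by omega
          rw [hstep] at hEv hEv'
          have hbb : (vex n ℓ h0 v (ℓ-2) = pr.1) ↔ (vex n ℓ h0 v' (ℓ-2) = pr.1) :=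
            ite_bool_eq (hBv.trans hBv'.symm)
          have h2L := det_pair hEv hEv' hbb
          have hbf : (vex n ℓ h0 v (ℓ-1) = b) ↔ (vex n ℓ h0 v' (ℓ-1) = b) := by rw [h2L.2]
          have h0L := det_pair (sym2_swap hFv) (sym2_swap hFv') hbf
          funext j
          have hjl := j.isLt
          have key : vex n ℓ h0 v (j : ℕ) = vex n ℓ h0 v' (j : ℕ) → v j = v' j := by
            rw [vex_lt h0 v hjl, vex_lt h0 v' hjl]
            intro hh
            simpa [Fin.eta] using hh
          by_cases hj0 : (j : ℕ) = 0
          · exact key (by rw [hj0]; exact h0L.2)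
          · by_cases hj2 : (j : ℕ) = ℓ-2
            · exact key (by rw [hj2]; exact h2L.1)
            · by_cases hjL : (j : ℕ) = ℓ-1
              · exact key (by rw [hjL]; exact h2L.2)
              · exact hagree j (mem_cofin.2 (by
                  simp only [Finset.mem_insert, Finset.mem_singleton]
                  push_neg
                  exact ⟨hj0, hj2, hjL⟩))
        · rw [cofin_card]
          have hcD : ({0, ℓ-2, ℓ-1} : Finset ℕ).card = 3 := by
            rw [Finset.card_insert_of_notMem (by
                simp only [Finset.mem_insert, Finset.mem_singleton]; omega),
              Finset.card_insert_of_notMem (by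
                simp only [Finset.mem_singleton]; omega),
              Finset.card_singleton]
          rw [hcD]
      · rw [if_neg (by push_neg; exact ⟨hc0, hcL⟩)]
        refine le_trans (card_le_of_agree2 _ (Finset.univ \ ({0, i, i+1, ℓ-1} : Finset ℕ).attachFin
          (fun m hm => by simp only [Finset.mem_insert, Finset.mem_singleton] at hm; omega))
          (fun v => if vex n ℓ h0 v 0 = a then true else false) ?_) ?_
        · intro v hv v' hv' hβ hagree
          obtain ⟨hEv, hBv, hFv⟩ := hE v hv
          obtain ⟨hEv', hBv', hFv'⟩ := hE v' hv'
          have hbb : (vex n ℓ h0 v i = pr.1) ↔ (vex n ℓ h0 v' i = pr.1) :=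
            ite_bool_eq (hBv.trans hBv'.symm)
          have hii := det_pair hEv hEv' hbb
          have hbf : (vex n ℓ h0 v 0 = a) ↔ (vex n ℓ h0 v' 0 = a) := ite_bool_eq hβ
          have h0L := det_pair hFv hFv' hbf
          funext j
          have hjl := j.isLt
          have key : vex n ℓ h0 v (j : ℕ) = vex n ℓ h0 v' (j : ℕ) → v j = v' j := by
            rw [vex_lt h0 v hjl, vex_lt h0 v' hjl]
            intro hh
            simpa [Fin.eta] using hh
          by_cases hj0 : (j : ℕ) = 0
          · exact key (by rw [hj0]; exact h0L.1)
          · by_cases hji : (j : ℕ) = i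
            · exact key (by rw [hji]; exact hii.1)
            · by_cases hji1 : (j : ℕ) = i+1
              · exact key (by rw [hji1]; exact hii.2)
              · by_cases hjL : (j : ℕ) = ℓ-1
                · exact key (by rw [hjL]; exact h0L.2)
                · exact hagree j (mem_cofin.2 (by
                    simp only [Finset.mem_insert, Finset.mem_singleton]
                    push_neg
                    exact ⟨hj0, hji, hji1, hjL⟩))
        · rw [cofin_card]
          have hcD : ({0, i, i+1, ℓ-1} : Finset ℕ).card = 4 := by
            rw [Finset.card_insert_of_notMem (by
                simp only [Finset.mem_insert, Finset.mem_singleton]; omega),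
              Finset.card_insert_of_notMem (by
                simp only [Finset.mem_insert, Finset.mem_singleton]; omega),
              Finset.card_insert_of_notMem (by
                simp only [Finset.mem_singleton]; omega),
              Finset.card_singleton]
          rw [hcD]
  refine le_trans (Finset.sum_le_sum hfib) ?_
  rw [Finset.sum_ite, Finset.sum_const, Finset.sum_const]
  have hT : ((Finset.range (ℓ-1)) ×ˢ (Finset.univ : Finset Bool)).filter
      (fun q => q.1 = 0 ∨ q.1 = ℓ-2) = ({0, ℓ-2} : Finset ℕ) ×ˢ (Finset.univ : Finset Bool) := by
    ext ⟨x, y⟩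
    simp only [Finset.mem_filter, Finset.mem_product, Finset.mem_range, Finset.mem_insert,
      Finset.mem_singleton, Finset.mem_univ, and_true, true_and]
    constructor
    · rintro ⟨-, h⟩; exact h
    · rintro (h | h) <;> constructor <;> omega
  have hTc : (((Finset.range (ℓ-1)) ×ˢ (Finset.univ : Finset Bool)).filter
      (fun q => q.1 = 0 ∨ q.1 = ℓ-2)).card = 4 := by
    rw [hT, Finset.card_product]
    have : ({0, ℓ-2} : Finset ℕ).card = 2 := by
      rw [Finset.card_insert_of_notMem (by simp only [Finset.mem_singleton]; omega),
        Finset.card_singleton]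
    rw [this]
    simp
  have hTc' : (((Finset.range (ℓ-1)) ×ˢ (Finset.univ : Finset Bool)).filter
      (fun q => ¬(q.1 = 0 ∨ q.1 = ℓ-2))).card = 2*(ℓ-3) := by
    have htot := Finset.card_filter_add_card_filter_not
      (s := (Finset.range (ℓ-1)) ×ˢ (Finset.univ : Finset Bool))
      (p := fun q => q.1 = 0 ∨ q.1 = ℓ-2)
    rw [hTc, Finset.card_product, Finset.card_range] at htot
    simp only [Finset.card_univ, Fintype.card_bool] at htot
    omega
  rw [hTc, hTc']
  simp only [smul_eq_mul]
  have h1 : 2*(ℓ-3) * (2 * n^(ℓ-4)) = 4*(ℓ-3)*n^(ℓ-4) := by ring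
  omega

end counting

section countR

lemma countR (n ℓ : ℕ) (hℓ : 2 < ℓ) (h0 : 0 < ℓ) (hn : 1 ≤ n) (f : Sym2 (Fin n)) (a b : Fin n)
    (hf : f = s(a, b)) (I : Finset (Sym2 (Fin n))) (hI : I.card ≤ ℓ - 2) :
    (VSet n ℓ h0 f I).card ≤ 2 * ((ℓ-1) * 2) ^ I.card * n ^ (ℓ-2-I.card) := by
  have hmaps : ∀ v ∈ VSet n ℓ h0 f I,
      ((fun x : {x // x ∈ I} =>
          ((⟨epos n ℓ x.val (vex n ℓ h0 v), epos_lt (by omega : 1 < ℓ) _ _⟩ : Fin (ℓ-1)),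
            if vex n ℓ h0 v (epos n ℓ x.val (vex n ℓ h0 v)) = sym2Fst x.val then true else false)),
        if vex n ℓ h0 v 0 = a then true else false) ∈
      (Finset.univ : Finset (({x // x ∈ I} → Fin (ℓ-1) × Bool) × Bool)) :=
    fun v _ => Finset.mem_univ _
  rw [Finset.card_eq_sum_card_fiberwise hmaps]
  have hfib : ∀ d ∈ (Finset.univ : Finset (({x // x ∈ I} → Fin (ℓ-1) × Bool) × Bool)),
      ((VSet n ℓ h0 f I).filter (fun v =>
        ((fun x : {x // x ∈ I} =>
            ((⟨epos n ℓ x.val (vex n ℓ h0 v), epos_lt (by omega : 1 < ℓ) _ _⟩ : Fin (ℓ-1)),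
              if vex n ℓ h0 v (epos n ℓ x.val (vex n ℓ h0 v)) = sym2Fst x.val then true else false)),
          if vex n ℓ h0 v 0 = a then true else false) = d)).card ≤ n ^ (ℓ-2-I.card) := by
    intro d _
    by_cases hne : ((VSet n ℓ h0 f I).filter (fun v =>
        ((fun x : {x // x ∈ I} =>
            ((⟨epos n ℓ x.val (vex n ℓ h0 v), epos_lt (by omega : 1 < ℓ) _ _⟩ : Fin (ℓ-1)),
              if vex n ℓ h0 v (epos n ℓ x.val (vex n ℓ h0 v)) = sym2Fst x.val then true else false)),
          if vex n ℓ h0 v 0 = a then true else false) = d)).Nonempty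
    swap
    · rw [Finset.not_nonempty_iff_eq_empty.mp hne, Finset.card_empty]
      exact Nat.zero_le _
    -- decoding facts for members of the fiber
    have hdec : ∀ v ∈ (VSet n ℓ h0 f I).filter (fun v =>
        ((fun x : {x // x ∈ I} =>
            ((⟨epos n ℓ x.val (vex n ℓ h0 v), epos_lt (by omega : 1 < ℓ) _ _⟩ : Fin (ℓ-1)),
              if vex n ℓ h0 v (epos n ℓ x.val (vex n ℓ h0 v)) = sym2Fst x.val then true else false)),
          if vex n ℓ h0 v 0 = a then true else false) = d),
        (∀ x : {x // x ∈ I},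
          s(vex n ℓ h0 v ((d.1 x).1 : ℕ), vex n ℓ h0 v (((d.1 x).1 : ℕ)+1)) = x.val ∧
          ((if vex n ℓ h0 v ((d.1 x).1 : ℕ) = sym2Fst x.val then true else false) = (d.1 x).2)) ∧
        s(vex n ℓ h0 v 0, vex n ℓ h0 v (ℓ-1)) = s(a,b) ∧
        ((if vex n ℓ h0 v 0 = a then true else false) = d.2) := by
      intro v hv
      rw [Finset.mem_filter] at hv
      obtain ⟨hvW, hΨv⟩ := hv
      rw [VSet, Finset.mem_filter] at hvW
      obtain ⟨-, ⟨hinj, hend⟩, hsub⟩ := hvW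
      have h1 := congrArg Prod.fst hΨv
      have h2 := congrArg Prod.snd hΨv
      dsimp only at h1 h2
      refine ⟨?_, hend.trans (by rw [hf]), h2⟩
      intro x
      have hx := congrFun h1 x
      have hpos : epos n ℓ x.val (vex n ℓ h0 v) = ((d.1 x).1 : ℕ) := by
        have := congrArg (fun z : Fin (ℓ-1) × Bool => (z.1 : ℕ)) hx
        dsimp only at this
        exact this
      have hbit := congrArg Prod.snd hx
      dsimp only at hbit
      rw [hpos] at hbit
      have hspec := epos_spec (hsub x.2)
      rw [hpos] at hspec
      exact ⟨hspec, hbit⟩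
    obtain ⟨v₀, hv₀⟩ := hne
    obtain ⟨hd₀, -, -⟩ := hdec v₀ hv₀
    -- the set of positions
    have hJcard : (Finset.image (fun x : {x // x ∈ I} => ((d.1 x).1 : ℕ)) Finset.univ).card
        = I.card := by
      rw [Finset.card_image_of_injOn, Finset.card_univ, Fintype.card_coe]
      intro x _ y _ hxy
      dsimp only at hxy
      have hx := (hd₀ x).1
      have hy := (hd₀ y).1
      rw [hxy] at hx
      exact Subtype.ext (hx.symm.trans hy)
    have hJsub : (Finset.image (fun x : {x // x ∈ I} => ((d.1 x).1 : ℕ)) Finset.univ) ⊆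
        Finset.range (ℓ-1) := by
      intro m hm
      obtain ⟨x, -, hx⟩ := Finset.mem_image.1 hm
      rw [← hx]
      exact Finset.mem_range.2 (d.1 x).1.isLt
    set J := Finset.image (fun x : {x // x ∈ I} => ((d.1 x).1 : ℕ)) Finset.univ with hJ
    have hshift := shift_card ℓ J hJsub (by rw [hJcard]; exact hI)
    rw [hJcard] at hshift
    have hDD : ∀ m ∈ (J ∪ J.image (· + 1)) ∪ ({0, ℓ-1} : Finset ℕ), m < ℓ := by
      intro m hm
      rcases Finset.mem_union.1 hm with hm | hm
      · rcases Finset.mem_union.1 hm with hm | hm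
        · have := Finset.mem_range.1 (hJsub hm); omega
        · obtain ⟨jj, hjj, hjm⟩ := Finset.mem_image.1 hm
          have := Finset.mem_range.1 (hJsub hjj); omega
      · simp only [Finset.mem_insert, Finset.mem_singleton] at hm; omega
    have hDDcard : I.card + 2 ≤ ((J ∪ J.image (· + 1)) ∪ ({0, ℓ-1} : Finset ℕ)).card := by
      have hsplit : (J ∪ J.image (· + 1)) ∪ ({0, ℓ-1} : Finset ℕ) =
          ((J ∪ J.image (· + 1)) \ ({0, ℓ-1} : Finset ℕ)) ∪ ({0, ℓ-1} : Finset ℕ) := by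
        rw [Finset.sdiff_union_self_eq_union]
      rw [hsplit, Finset.card_union_of_disjoint Finset.sdiff_disjoint]
      have hc2 : ({0, ℓ-1} : Finset ℕ).card = 2 := by
        rw [Finset.card_insert_of_notMem (by simp only [Finset.mem_singleton]; omega),
          Finset.card_singleton]
      omega
    refine le_trans (card_le_of_agree _ (Finset.univ \
      ((J ∪ J.image (· + 1)) ∪ ({0, ℓ-1} : Finset ℕ)).attachFin hDD) ?_) ?_
    · intro v hv v' hv' hagree
      obtain ⟨hdv, hFv, hβv⟩ := hdec v hv
      obtain ⟨hdv', hFv', hβv'⟩ := hdec v' hv'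
      have hbf : (vex n ℓ h0 v 0 = a) ↔ (vex n ℓ h0 v' 0 = a) :=
        ite_bool_eq (hβv.trans hβv'.symm)
      have h0L := det_pair hFv hFv' hbf
      have hdet : ∀ x : {x // x ∈ I},
          vex n ℓ h0 v ((d.1 x).1 : ℕ) = vex n ℓ h0 v' ((d.1 x).1 : ℕ) ∧
          vex n ℓ h0 v (((d.1 x).1 : ℕ)+1) = vex n ℓ h0 v' (((d.1 x).1 : ℕ)+1) := by
        intro x
        have hsx := (hdv x).1.trans (sym2_pick_spec x.val)
        have hsx' := (hdv' x).1.trans (sym2_pick_spec x.val)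
        exact det_pair hsx hsx' (ite_bool_eq (((hdv x).2).trans ((hdv' x).2).symm))
      funext j
      have hjl := j.isLt
      have key : vex n ℓ h0 v (j : ℕ) = vex n ℓ h0 v' (j : ℕ) → v j = v' j := by
        rw [vex_lt h0 v hjl, vex_lt h0 v' hjl]
        intro hh
        simpa [Fin.eta] using hh
      by_cases hj : (j : ℕ) ∈ (J ∪ J.image (· + 1)) ∪ ({0, ℓ-1} : Finset ℕ)
      · apply key
        rcases Finset.mem_union.1 hj with hjS | hj0L
        · rcases Finset.mem_union.1 hjS with hjJ | hjJ1
          · obtain ⟨x, -, hx⟩ := Finset.mem_image.1 hjJ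
            rw [← hx]
            exact (hdet x).1
          · obtain ⟨m, hmJ, hm⟩ := Finset.mem_image.1 hjJ1
            obtain ⟨x, -, hx⟩ := Finset.mem_image.1 hmJ
            rw [← hm, ← hx]
            exact (hdet x).2
        · simp only [Finset.mem_insert, Finset.mem_singleton] at hj0L
          rcases hj0L with h | h
          · rw [h]; exact h0L.1
          · rw [h]; exact h0L.2
      · exact hagree j (mem_cofin.2 hj)
    · rw [cofin_card]
      exact Nat.pow_le_pow_right (by omega) (by omega)
  calc ∑ d ∈ (Finset.univ : Finset (({x // x ∈ I} → Fin (ℓ-1) × Bool) × Bool)),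
        ((VSet n ℓ h0 f I).filter (fun v =>
          ((fun x : {x // x ∈ I} =>
              ((⟨epos n ℓ x.val (vex n ℓ h0 v), epos_lt (by omega : 1 < ℓ) _ _⟩ : Fin (ℓ-1)),
                if vex n ℓ h0 v (epos n ℓ x.val (vex n ℓ h0 v)) = sym2Fst x.val then true else false)),
            if vex n ℓ h0 v 0 = a then true else false) = d)).card
      ≤ ∑ d ∈ (Finset.univ : Finset (({x // x ∈ I} → Fin (ℓ-1) × Bool) × Bool)),
          n ^ (ℓ-2-I.card) := Finset.sum_le_sum hfib
    _ = 2 * ((ℓ-1) * 2) ^ I.card * n ^ (ℓ-2-I.card) := by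
        rw [Finset.sum_const, Finset.card_univ]
        simp only [Fintype.card_prod, Fintype.card_fun, Fintype.card_coe, Fintype.card_bool,
          Fintype.card_fin, smul_eq_mul]
        ring

end countR

section halve

lemma halve (n ℓ : ℕ) (hℓ : 2 < ℓ) (h0 : 0 < ℓ) (f : Sym2 (Fin n))
    (EQ I : Finset (Sym2 (Fin n))) :
    2 * ((Finset.univ.filter (fun A : Finset (Sym2 (Fin n)) =>
        (∃ w, isPathCopy n ℓ f w ∧ pathEdges n ℓ w = A) ∧
        1 ≤ (A ∩ EQ).card ∧ (A ∩ EQ).card < ℓ - 1)).filter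
      (fun A => A ∩ EQ = I)).card ≤ (VSet n ℓ h0 f I).card := by
  classical
  set 𝒜I := (Finset.univ.filter (fun A : Finset (Sym2 (Fin n)) =>
        (∃ w, isPathCopy n ℓ f w ∧ pathEdges n ℓ w = A) ∧
        1 ≤ (A ∩ EQ).card ∧ (A ∩ EQ).card < ℓ - 1)).filter
      (fun A => A ∩ EQ = I) with h𝒜I
  have hmaps : ∀ v ∈ VSet n ℓ h0 f I,
      pathEdges n ℓ (vex n ℓ h0 v) ∈ (VSet n ℓ h0 f I).image
        (fun v => pathEdges n ℓ (vex n ℓ h0 v)) :=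
    fun v hv => Finset.mem_image_of_mem _ hv
  -- for each A ∈ 𝒜I we get two distinct members of the fiber
  have hkey : ∀ A ∈ 𝒜I,
      A ∈ (VSet n ℓ h0 f I).image (fun v => pathEdges n ℓ (vex n ℓ h0 v)) ∧
      2 ≤ ((VSet n ℓ h0 f I).filter
        (fun v => pathEdges n ℓ (vex n ℓ h0 v) = A)).card := by
    intro A hA
    rw [h𝒜I, Finset.mem_filter, Finset.mem_filter] at hA
    obtain ⟨⟨-, ⟨w, hcopy, hedges⟩, -, -⟩, hinter⟩ := hA
    have hIA : I ⊆ A := by rw [← hinter]; exact Finset.inter_subset_left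
    -- the forward labelling
    have hag1 : ∀ i < ℓ, w i = vex n ℓ h0 (fun j : Fin ℓ => w (j : ℕ)) i := by
      intro i hi
      rw [vex_lt h0 _ hi]
    have hcopy1 : isPathCopy n ℓ f (vex n ℓ h0 (fun j : Fin ℓ => w (j : ℕ))) :=
      isPathCopy_congr h0 hag1 hcopy
    have hedges1 : pathEdges n ℓ (vex n ℓ h0 (fun j : Fin ℓ => w (j : ℕ))) = A := by
      rw [← pathEdges_congr hag1, hedges]
    have mem1 : (fun j : Fin ℓ => w (j : ℕ)) ∈ VSet n ℓ h0 f I := by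
      rw [VSet, Finset.mem_filter]
      exact ⟨Finset.mem_univ _, hcopy1, by rw [hedges1]; exact hIA⟩
    -- the reversed labelling
    have hag2 : ∀ i < ℓ, vex n ℓ h0 (fun j : Fin ℓ => w (ℓ - 1 - (j : ℕ))) i = w (ℓ - 1 - i) := by
      intro i hi
      rw [vex_lt h0 _ hi]
    have hcopy2 : isPathCopy n ℓ f (vex n ℓ h0 (fun j : Fin ℓ => w (ℓ - 1 - (j : ℕ)))) := by
      constructor
      · intro x hx y hy hxy
        rw [Set.mem_Iio] at hx hy
        rw [hag2 x hx, hag2 y hy] at hxy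
        have := hcopy.1 (Set.mem_Iio.2 (show ℓ-1-x < ℓ by omega))
          (Set.mem_Iio.2 (show ℓ-1-y < ℓ by omega)) hxy
        omega
      · rw [hag2 0 (by omega), hag2 (ℓ-1) (by omega), Nat.sub_self, Nat.sub_zero]
        rw [Sym2.eq_swap]
        exact hcopy.2
    have hedges2 : pathEdges n ℓ (vex n ℓ h0 (fun j : Fin ℓ => w (ℓ - 1 - (j : ℕ)))) = A := by
      rw [← hedges]
      ext z
      rw [mem_pathEdges, mem_pathEdges]
      constructor
      · rintro ⟨i, hi, hz⟩
        rw [hag2 i (by omega), hag2 (i+1) (by omega)] at hz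
        refine ⟨ℓ-2-i, by omega, ?_⟩
        have h1 : ℓ-2-i+1 = ℓ-1-i := by omega
        have h2 : ℓ-1-(i+1) = ℓ-2-i := by omega
        rw [h2] at hz
        rw [h1, Sym2.eq_swap]
        exact hz
      · rintro ⟨i, hi, hz⟩
        refine ⟨ℓ-2-i, by omega, ?_⟩
        rw [hag2 (ℓ-2-i) (by omega), hag2 (ℓ-2-i+1) (by omega)]
        have h1 : ℓ-1-(ℓ-2-i) = i+1 := by omega
        have h2 : ℓ-1-(ℓ-2-i+1) = i := by omega
        rw [h1, h2, Sym2.eq_swap]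
        exact hz
    have mem2 : (fun j : Fin ℓ => w (ℓ - 1 - (j : ℕ))) ∈ VSet n ℓ h0 f I := by
      rw [VSet, Finset.mem_filter]
      refine ⟨Finset.mem_univ _, hcopy2, by rw [hedges2]; exact hIA⟩
    have hne : (fun j : Fin ℓ => w (j : ℕ)) ≠ (fun j : Fin ℓ => w (ℓ - 1 - (j : ℕ))) := by
      intro hh
      have h00 := congrFun hh ⟨0, by omega⟩
      simp only at h00
      have := hcopy.1 (Set.mem_Iio.2 (show (0:ℕ) < ℓ by omega))
        (Set.mem_Iio.2 (show ℓ-1-0 < ℓ by omega)) h00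
      omega
    constructor
    · exact Finset.mem_image.2 ⟨_, mem1, hedges1⟩
    · apply Finset.one_lt_card.2
      refine ⟨_, Finset.mem_filter.2 ⟨mem1, hedges1⟩, _,
        Finset.mem_filter.2 ⟨mem2, hedges2⟩, hne⟩
  calc 2 * 𝒜I.card = ∑ _A ∈ 𝒜I, 2 := by rw [Finset.sum_const, smul_eq_mul, mul_comm]
    _ ≤ ∑ A ∈ 𝒜I, ((VSet n ℓ h0 f I).filter
          (fun v => pathEdges n ℓ (vex n ℓ h0 v) = A)).card :=
        Finset.sum_le_sum (fun A hA => (hkey A hA).2)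
    _ ≤ ∑ A ∈ (VSet n ℓ h0 f I).image (fun v => pathEdges n ℓ (vex n ℓ h0 v)),
          ((VSet n ℓ h0 f I).filter
            (fun v => pathEdges n ℓ (vex n ℓ h0 v) = A)).card :=
        Finset.sum_le_sum_of_subset (fun A hA => (hkey A hA).1)
    _ = (VSet n ℓ h0 f I).card := (Finset.card_eq_sum_card_fiberwise hmaps).symm

end halve

/-- `Δ* = Σ_P ℙ[P ⊆ G(n,p) ∣ Q ⊆ G(n,p)]`, summed over (unlabelled) copies `P`
of `P_ℓ` with endpoints `f` satisfying `1 ≤ |E(P) ∩ E(Q)| < ℓ−1`; the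
conditional probability equals `p^(ℓ−1−|E(P)∩E(Q)|)`. -/
noncomputable def deltaStar (n ℓ : ℕ) (p : ℝ) (f : Sym2 (Fin n))
    (EQ : Finset (Sym2 (Fin n))) : ℝ :=
  ∑ A ∈ Finset.univ.filter (fun A : Finset (Sym2 (Fin n)) =>
      (∃ w, isPathCopy n ℓ f w ∧ pathEdges n ℓ w = A) ∧
      1 ≤ (A ∩ EQ).card ∧ (A ∩ EQ).card < ℓ - 1),
    p ^ (ℓ - 1 - (A ∩ EQ).card)

lemma two_mul_add_two_le_two_pow (k : ℕ) (hk : 3 ≤ k) : 2*k + 2 ≤ 2^k := by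
  induction k with
  | zero => omega
  | succ m ih =>
    rcases Nat.lt_or_ge m 3 with hm | hm
    · have : m = 2 := by omega
      subst this
      norm_num
    · have h1 := ih hm
      have h2 : 2 ≤ 2^m := le_trans (by norm_num) (Nat.pow_le_pow_right (by norm_num) hm)
      calc 2*(m+1) + 2 = (2*m + 2) + 2 := by ring
        _ ≤ 2^m + 2^m := by omega
        _ = 2^(m+1) := by rw [pow_succ]; ring

theorem stmt_10 (ℓ : ℕ) (hℓ : 2 < ℓ) (p : ℕ → ℝ)
    (hp : ∀ n, 0 < p n ∧ p n ≤ 1)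
    (hω : Asymptotics.IsLittleO Filter.atTop
      (fun n : ℕ => ((n : ℝ)) ^ ((1 : ℝ) / ((ℓ : ℝ) - 1))) (fun n : ℕ => p n * n)) :
    ∀ᶠ n in Filter.atTop, ∀ (wq : ℕ → Fin n) (f : Sym2 (Fin n)),
      isPathCopy n ℓ f wq →
      deltaStar n ℓ (p n) f (pathEdges n ℓ wq) ≤
        2 ^ (ℓ - 1) * (n : ℝ) ^ (ℓ - 2) * (p n) ^ (ℓ - 1) / ((n : ℝ) * p n) := by
  have h0 : 0 < ℓ := by omega
  set M : ℕ := 2 ^ ℓ * ((ℓ-1) * 2) ^ ℓ + 2*(ℓ-1)*(ℓ-3) + 4 with hM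
  have hMge4 : 4 ≤ M := by rw [hM]; exact Nat.le_add_left 4 _
  have hlR : (3:ℝ) ≤ (ℓ:ℝ) := by exact_mod_cast hℓ
  have hexp : (0:ℝ) < 1/((ℓ:ℝ)-1) := by
    apply div_pos one_pos
    linarith
  have htd : Filter.Tendsto (fun m : ℕ => ((m:ℝ)) ^ ((1:ℝ)/((ℓ:ℝ)-1)))
      Filter.atTop Filter.atTop :=
    (tendsto_rpow_atTop hexp).comp tendsto_natCast_atTop_atTop
  have hev1 : ∀ᶠ (m:ℕ) in Filter.atTop, (M:ℝ) ≤ p m * m := by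
    filter_upwards [hω.def one_pos, htd.eventually_ge_atTop (M:ℝ)] with m h1 h2
    have hnn : (0:ℝ) ≤ (m:ℝ) ^ ((1:ℝ)/((ℓ:ℝ)-1)) := Real.rpow_nonneg (Nat.cast_nonneg m) _
    have hgnn : (0:ℝ) ≤ p m * m := mul_nonneg (hp m).1.le (Nat.cast_nonneg m)
    rw [Real.norm_of_nonneg hnn, Real.norm_of_nonneg hgnn, one_mul] at h1
    exact le_trans h2 h1
  filter_upwards [hev1, Filter.eventually_ge_atTop M] with n hnp hn
  intro wq f hQ
  have hp0 : 0 < p n := (hp n).1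
  have hp1 : p n ≤ 1 := (hp n).2
  have hf : f = s(wq 0, wq (ℓ-1)) := hQ.2.symm
  set EQ := pathEdges n ℓ wq with hEQ
  have hEQcard : EQ.card ≤ ℓ - 1 := by
    rw [hEQ, pathEdges]
    exact le_trans Finset.card_image_le (le_of_eq (Finset.card_range _))
  have hn4 : 4 ≤ n := le_trans hMge4 hn
  have hnR : (0:ℝ) < (n:ℝ) := by
    have : (0:ℕ) < n := by omega
    exact_mod_cast this
  have hXP : (0:ℝ) < (n:ℝ) * p n := mul_pos hnR hp0
  have hnpM : (M:ℝ) ≤ (n:ℝ) * p n := by rw [mul_comm]; exact hnp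
  have hnM : (M:ℝ) ≤ (n:ℝ) := by exact_mod_cast hn
  have hXP1 : (1:ℝ) ≤ (n:ℝ) * p n := by
    refine le_trans ?_ hnpM
    exact_mod_cast (show (1:ℕ) ≤ M by omega)
  have hmapsA : ∀ A ∈ Finset.univ.filter (fun A : Finset (Sym2 (Fin n)) =>
      (∃ w, isPathCopy n ℓ f w ∧ pathEdges n ℓ w = A) ∧
      1 ≤ (A ∩ EQ).card ∧ (A ∩ EQ).card < ℓ - 1),
      A ∩ EQ ∈ EQ.powerset.filter (fun I => 1 ≤ I.card ∧ I.card ≤ ℓ-2) := by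
    intro A hA
    rw [Finset.mem_filter] at hA
    rw [Finset.mem_filter]
    refine ⟨Finset.mem_powerset.2 Finset.inter_subset_right, hA.2.2.1, by
      have := hA.2.2.2; omega⟩
  unfold deltaStar
  rw [← Finset.sum_fiberwise_of_maps_to hmapsA
    (fun A => (p n) ^ (ℓ - 1 - (A ∩ EQ).card))]
  rw [← Finset.sum_filter_add_sum_filter_not
    (EQ.powerset.filter (fun I => 1 ≤ I.card ∧ I.card ≤ ℓ-2)) (fun I => I.card = 1)]
  -- notation
  set X := (n:ℝ) with hX
  set P := p n with hP
  set U : ℝ := X^(ℓ-3) * P^(ℓ-2) with hU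
  have hUpos : (0:ℝ) < U := by rw [hU]; positivity
  set B1 : ℝ := (2*X^(ℓ-3) + 2*((ℓ-3:ℕ):ℝ)*X^(ℓ-4)) * P^(ℓ-2) with hB1def
  have hB1nn : (0:ℝ) ≤ B1 := by rw [hB1def]; positivity
  -- inner sum rewriting + bounds for the card-1 part
  have hB1 : ∑ I ∈ (EQ.powerset.filter (fun I => 1 ≤ I.card ∧ I.card ≤ ℓ-2)).filter
        (fun I => I.card = 1),
      (∑ A ∈ (Finset.univ.filter (fun A : Finset (Sym2 (Fin n)) =>
        (∃ w, isPathCopy n ℓ f w ∧ pathEdges n ℓ w = A) ∧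
        1 ≤ (A ∩ EQ).card ∧ (A ∩ EQ).card < ℓ - 1)).filter (fun A => A ∩ EQ = I),
        (p n) ^ (ℓ - 1 - (A ∩ EQ).card)) ≤ ((ℓ-1:ℕ):ℝ) * B1 := by
    have hterm : ∀ I ∈ (EQ.powerset.filter (fun I => 1 ≤ I.card ∧ I.card ≤ ℓ-2)).filter
        (fun I => I.card = 1),
        (∑ A ∈ (Finset.univ.filter (fun A : Finset (Sym2 (Fin n)) =>
          (∃ w, isPathCopy n ℓ f w ∧ pathEdges n ℓ w = A) ∧
          1 ≤ (A ∩ EQ).card ∧ (A ∩ EQ).card < ℓ - 1)).filter (fun A => A ∩ EQ = I),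
          (p n) ^ (ℓ - 1 - (A ∩ EQ).card)) ≤ B1 := by
      intro I hI
      rw [Finset.mem_filter] at hI
      obtain ⟨hIT, hI1⟩ := hI
      obtain ⟨e, he⟩ := Finset.card_eq_one.1 hI1
      have hcnt := count1 n ℓ hℓ h0 f (wq 0) (wq (ℓ-1)) hf e
      have h2x := halve n ℓ hℓ h0 f EQ I
      rw [he] at h2x
      have hfib : ((Finset.univ.filter (fun A : Finset (Sym2 (Fin n)) =>
          (∃ w, isPathCopy n ℓ f w ∧ pathEdges n ℓ w = A) ∧
          1 ≤ (A ∩ EQ).card ∧ (A ∩ EQ).card < ℓ - 1)).filter (fun A => A ∩ EQ = I)).card ≤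
          2*n^(ℓ-3) + 2*(ℓ-3)*n^(ℓ-4) := by
        rw [he]
        have h3 := le_trans h2x hcnt
        have h4 : 4*n^(ℓ-3) + 4*(ℓ-3)*n^(ℓ-4) = 2*(2*n^(ℓ-3)+2*(ℓ-3)*n^(ℓ-4)) := by ring
        rw [h4] at h3
        exact Nat.le_of_mul_le_mul_left h3 (by norm_num)
      calc (∑ A ∈ (Finset.univ.filter (fun A : Finset (Sym2 (Fin n)) =>
            (∃ w, isPathCopy n ℓ f w ∧ pathEdges n ℓ w = A) ∧
            1 ≤ (A ∩ EQ).card ∧ (A ∩ EQ).card < ℓ - 1)).filter (fun A => A ∩ EQ = I),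
            (p n) ^ (ℓ - 1 - (A ∩ EQ).card))
          = ∑ A ∈ (Finset.univ.filter (fun A : Finset (Sym2 (Fin n)) =>
            (∃ w, isPathCopy n ℓ f w ∧ pathEdges n ℓ w = A) ∧
            1 ≤ (A ∩ EQ).card ∧ (A ∩ EQ).card < ℓ - 1)).filter (fun A => A ∩ EQ = I),
            (p n) ^ (ℓ - 2) := by
            refine Finset.sum_congr rfl (fun A hA => ?_)
            have hAI := (Finset.mem_filter.1 hA).2
            rw [hAI, hI1]
            congr 1 <;> omega
        _ = (((Finset.univ.filter (fun A : Finset (Sym2 (Fin n)) =>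
            (∃ w, isPathCopy n ℓ f w ∧ pathEdges n ℓ w = A) ∧
            1 ≤ (A ∩ EQ).card ∧ (A ∩ EQ).card < ℓ - 1)).filter (fun A => A ∩ EQ = I)).card : ℝ)
            * (p n) ^ (ℓ-2) := by rw [Finset.sum_const, nsmul_eq_mul]
        _ ≤ B1 := by
            rw [hB1def]
            apply mul_le_mul_of_nonneg_right ?_ (pow_nonneg hp0.le _)
            calc (((Finset.univ.filter (fun A : Finset (Sym2 (Fin n)) =>
                (∃ w, isPathCopy n ℓ f w ∧ pathEdges n ℓ w = A) ∧
                1 ≤ (A ∩ EQ).card ∧ (A ∩ EQ).card < ℓ - 1)).filter (fun A => A ∩ EQ = I)).card : ℝ)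
                ≤ ((2*n^(ℓ-3) + 2*(ℓ-3)*n^(ℓ-4) : ℕ) : ℝ) := by exact_mod_cast hfib
              _ = 2*X^(ℓ-3) + 2*((ℓ-3:ℕ):ℝ)*X^(ℓ-4) := by push_cast [hX]; ring
    refine le_trans (Finset.sum_le_card_nsmul _ _ B1 hterm) ?_
    have hcard1 : ((EQ.powerset.filter (fun I => 1 ≤ I.card ∧ I.card ≤ ℓ-2)).filter
        (fun I => I.card = 1)).card ≤ ℓ-1 := by
      have hsub1 : (EQ.powerset.filter (fun I => 1 ≤ I.card ∧ I.card ≤ ℓ-2)).filter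
          (fun I => I.card = 1) ⊆ EQ.powersetCard 1 := fun I hI =>
        Finset.mem_powersetCard.2
          ⟨Finset.mem_powerset.1 (Finset.mem_filter.1 (Finset.mem_filter.1 hI).1).1,
            (Finset.mem_filter.1 hI).2⟩
      refine le_trans (Finset.card_le_card hsub1) ?_
      rw [Finset.card_powersetCard, Nat.choose_one_right]
      exact hEQcard
    calc _ ≤ (ℓ-1) • B1 := nsmul_le_nsmul_left hB1nn hcard1
      _ = ((ℓ-1:ℕ):ℝ) * B1 := by rw [nsmul_eq_mul]

  -- now handle the part of the sum over I with |I| ≥ 2, and conclude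
  have hXne : X ≠ 0 := ne_of_gt hnR
  have hPne : P ≠ 0 := ne_of_gt hp0
  by_cases hl3 : ℓ = 3
  · -- for ℓ = 3 there are no I with 2 ≤ |I| ≤ ℓ-2
    have hzero : ∑ I ∈ (EQ.powerset.filter (fun I => 1 ≤ I.card ∧ I.card ≤ ℓ-2)).filter
        (fun I => ¬ I.card = 1),
        (∑ A ∈ (Finset.univ.filter (fun A : Finset (Sym2 (Fin n)) =>
          (∃ w, isPathCopy n ℓ f w ∧ pathEdges n ℓ w = A) ∧
          1 ≤ (A ∩ EQ).card ∧ (A ∩ EQ).card < ℓ - 1)).filter (fun A => A ∩ EQ = I),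
          P ^ (ℓ - 1 - (A ∩ EQ).card)) = 0 := by
      apply Finset.sum_eq_zero
      intro I hI
      rw [Finset.mem_filter, Finset.mem_filter] at hI
      exfalso
      have h1 := hI.1.2.1
      have h2 := hI.1.2.2
      have h3 := hI.2
      omega
    rw [hzero, add_zero]
    refine le_trans hB1 ?_
    subst hl3
    have hre : (2:ℝ)^(3-1) * X^(3-2) * P^(3-1) / (X*P) = 4 * P := by
      norm_num
      field_simp
      try ring
    rw [hre, hB1def]
    norm_num
    linarith
  · -- ℓ ≥ 4
    have hl4 : 4 ≤ ℓ := by omega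
    have hw1 : (1:ℝ) ≤ (((ℓ-1)*2 : ℕ):ℝ) := by
      exact_mod_cast (show (1:ℕ) ≤ (ℓ-1)*2 by omega)
    have hB2 : ∑ I ∈ (EQ.powerset.filter (fun I => 1 ≤ I.card ∧ I.card ≤ ℓ-2)).filter
        (fun I => ¬ I.card = 1),
        (∑ A ∈ (Finset.univ.filter (fun A : Finset (Sym2 (Fin n)) =>
          (∃ w, isPathCopy n ℓ f w ∧ pathEdges n ℓ w = A) ∧
          1 ≤ (A ∩ EQ).card ∧ (A ∩ EQ).card < ℓ - 1)).filter (fun A => A ∩ EQ = I),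
          P ^ (ℓ - 1 - (A ∩ EQ).card)) ≤
        ((2^(ℓ-1):ℕ):ℝ) * (((((ℓ-1)*2)^ℓ : ℕ):ℝ) * (U / (X*P))) := by
      have hitem_nn : (0:ℝ) ≤ ((((ℓ-1)*2)^ℓ : ℕ):ℝ) * (U / (X*P)) := by
        apply mul_nonneg (Nat.cast_nonneg _)
        exact le_of_lt (div_pos hUpos hXP)
      have hterm2 : ∀ I ∈ (EQ.powerset.filter (fun I => 1 ≤ I.card ∧ I.card ≤ ℓ-2)).filter
          (fun I => ¬ I.card = 1),
          (∑ A ∈ (Finset.univ.filter (fun A : Finset (Sym2 (Fin n)) =>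
            (∃ w, isPathCopy n ℓ f w ∧ pathEdges n ℓ w = A) ∧
            1 ≤ (A ∩ EQ).card ∧ (A ∩ EQ).card < ℓ - 1)).filter (fun A => A ∩ EQ = I),
            P ^ (ℓ - 1 - (A ∩ EQ).card)) ≤
          ((((ℓ-1)*2)^ℓ : ℕ):ℝ) * (U / (X*P)) := by
        intro I hI
        rw [Finset.mem_filter] at hI
        obtain ⟨hIT, hIne1⟩ := hI
        rw [Finset.mem_filter] at hIT
        have hr1 : 1 ≤ I.card := hIT.2.1
        have hrle : I.card ≤ ℓ-2 := hIT.2.2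
        have hr2 : 2 ≤ I.card := by omega
        have h2x := halve n ℓ hℓ h0 f EQ I
        have hcnt := countR n ℓ hℓ h0 (by omega) f (wq 0) (wq (ℓ-1)) hf I hrle
        have hfibN : ((Finset.univ.filter (fun A : Finset (Sym2 (Fin n)) =>
            (∃ w, isPathCopy n ℓ f w ∧ pathEdges n ℓ w = A) ∧
            1 ≤ (A ∩ EQ).card ∧ (A ∩ EQ).card < ℓ - 1)).filter (fun A => A ∩ EQ = I)).card ≤
            ((ℓ-1)*2)^I.card * n^(ℓ-2-I.card) := by
          have h3 := le_trans h2x hcnt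
          rw [mul_assoc] at h3
          exact Nat.le_of_mul_le_mul_left h3 (by norm_num)
        calc (∑ A ∈ (Finset.univ.filter (fun A : Finset (Sym2 (Fin n)) =>
              (∃ w, isPathCopy n ℓ f w ∧ pathEdges n ℓ w = A) ∧
              1 ≤ (A ∩ EQ).card ∧ (A ∩ EQ).card < ℓ - 1)).filter (fun A => A ∩ EQ = I),
              P ^ (ℓ - 1 - (A ∩ EQ).card))
            = ∑ A ∈ (Finset.univ.filter (fun A : Finset (Sym2 (Fin n)) =>
              (∃ w, isPathCopy n ℓ f w ∧ pathEdges n ℓ w = A) ∧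
              1 ≤ (A ∩ EQ).card ∧ (A ∩ EQ).card < ℓ - 1)).filter (fun A => A ∩ EQ = I),
              P ^ (ℓ - 1 - I.card) := by
              refine Finset.sum_congr rfl (fun A hA => ?_)
              rw [(Finset.mem_filter.1 hA).2]
          _ = (((Finset.univ.filter (fun A : Finset (Sym2 (Fin n)) =>
              (∃ w, isPathCopy n ℓ f w ∧ pathEdges n ℓ w = A) ∧
              1 ≤ (A ∩ EQ).card ∧ (A ∩ EQ).card < ℓ - 1)).filter (fun A => A ∩ EQ = I)).card : ℝ)
              * P ^ (ℓ-1-I.card) := by rw [Finset.sum_const, nsmul_eq_mul]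
          _ ≤ ((((ℓ-1)*2)^I.card * n^(ℓ-2-I.card) : ℕ) : ℝ) * P ^ (ℓ-1-I.card) := by
              apply mul_le_mul_of_nonneg_right ?_ (pow_nonneg hp0.le _)
              exact_mod_cast hfibN
          _ = (((ℓ-1)*2 : ℕ):ℝ)^I.card * X^(ℓ-2-I.card) * P ^ (ℓ-1-I.card) := by
              rw [hX]; push_cast; ring
          _ ≤ ((((ℓ-1)*2)^ℓ : ℕ):ℝ) * (U / (X*P)) := by
              rw [← mul_div_assoc, le_div_iff₀ hXP]
              have hXPpow : X*P ≤ (X*P)^(I.card - 1) := le_self_pow₀ hXP1 (by omega)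
              have e1 : X^(ℓ-2-I.card) * X^(I.card-1) = X^(ℓ-3) := by
                rw [← pow_add]; congr 1; omega
              have e2 : P^(ℓ-1-I.card) * P^(I.card-1) = P^(ℓ-2) := by
                rw [← pow_add]; congr 1; omega
              calc (((ℓ-1)*2 : ℕ):ℝ)^I.card * X^(ℓ-2-I.card) * P ^ (ℓ-1-I.card) * (X*P)
                  ≤ (((ℓ-1)*2 : ℕ):ℝ)^I.card * X^(ℓ-2-I.card) * P ^ (ℓ-1-I.card)
                    * (X*P)^(I.card-1) := by
                    apply mul_le_mul_of_nonneg_left hXPpow (by positivity)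
                _ = (((ℓ-1)*2 : ℕ):ℝ)^I.card * (X^(ℓ-2-I.card) * X^(I.card-1))
                    * (P^(ℓ-1-I.card) * P^(I.card-1)) := by rw [mul_pow]; ring
                _ = (((ℓ-1)*2 : ℕ):ℝ)^I.card * X^(ℓ-3) * P^(ℓ-2) := by rw [e1, e2]
                _ ≤ ((((ℓ-1)*2)^ℓ : ℕ):ℝ) * U := by
                    have hwr : (((ℓ-1)*2 : ℕ):ℝ)^I.card ≤ (((ℓ-1)*2 : ℕ):ℝ)^ℓ :=
                      pow_le_pow_right₀ hw1 (by omega)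
                    have hcc : ((((ℓ-1)*2)^ℓ : ℕ):ℝ) = (((ℓ-1)*2 : ℕ):ℝ)^ℓ := by push_cast; ring
                    rw [hcc, hU, mul_assoc]
                    apply mul_le_mul_of_nonneg_right hwr (by positivity)
      refine le_trans (Finset.sum_le_card_nsmul _ _ _ hterm2) ?_
      have hcard2 : ((EQ.powerset.filter (fun I => 1 ≤ I.card ∧ I.card ≤ ℓ-2)).filter
          (fun I => ¬ I.card = 1)).card ≤ 2^(ℓ-1) := by
        have hsub2 : (EQ.powerset.filter (fun I => 1 ≤ I.card ∧ I.card ≤ ℓ-2)).filter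
            (fun I => ¬ I.card = 1) ⊆ EQ.powerset := fun I hI =>
          (Finset.mem_filter.1 (Finset.mem_filter.1 hI).1).1
        refine le_trans (Finset.card_le_card hsub2) ?_
        rw [Finset.card_powerset]
        exact Nat.pow_le_pow_right (by norm_num) hEQcard
      calc _ ≤ (2^(ℓ-1)) • (((((ℓ-1)*2)^ℓ : ℕ):ℝ) * (U / (X*P))) :=
            nsmul_le_nsmul_left hitem_nn hcard2
        _ = ((2^(ℓ-1):ℕ):ℝ) * (((((ℓ-1)*2)^ℓ : ℕ):ℝ) * (U / (X*P))) := by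
            rw [nsmul_eq_mul]
    refine le_trans (add_le_add hB1 hB2) ?_
    -- final numeric inequality
    have e34 : X^(ℓ-4) * X = X^(ℓ-3) := by rw [← pow_succ]; congr 1; omega
    have hkey1 : ((ℓ-1:ℕ):ℝ) * (2*((ℓ-3:ℕ):ℝ)*X^(ℓ-4)) * P^(ℓ-2) ≤ U := by
      rw [hU]
      apply mul_le_mul_of_nonneg_right ?_ (pow_nonneg hp0.le _)
      have hcoef : ((ℓ-1:ℕ):ℝ) * (2*((ℓ-3:ℕ):ℝ)) ≤ X := by
        refine le_trans ?_ hnM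
        have hN : (ℓ-1) * (2*(ℓ-3)) ≤ M := by
          rw [hM]
          calc (ℓ-1) * (2*(ℓ-3)) = 2*(ℓ-1)*(ℓ-3) := by ring
            _ ≤ 2 ^ ℓ * ((ℓ-1) * 2) ^ ℓ + 2*(ℓ-1)*(ℓ-3) := Nat.le_add_left _ _
            _ ≤ 2 ^ ℓ * ((ℓ-1) * 2) ^ ℓ + 2*(ℓ-1)*(ℓ-3) + 4 := Nat.le_add_right _ 4
        calc ((ℓ-1:ℕ):ℝ) * (2*((ℓ-3:ℕ):ℝ)) = (((ℓ-1) * (2*(ℓ-3)) : ℕ):ℝ) := by push_cast; ring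
          _ ≤ (M:ℝ) := by exact_mod_cast hN
      calc ((ℓ-1:ℕ):ℝ) * (2*((ℓ-3:ℕ):ℝ)*X^(ℓ-4))
          = ((ℓ-1:ℕ):ℝ) * (2*((ℓ-3:ℕ):ℝ)) * X^(ℓ-4) := by ring
        _ ≤ X * X^(ℓ-4) := mul_le_mul_of_nonneg_right hcoef (by positivity)
        _ = X^(ℓ-3) := by rw [mul_comm]; exact e34
    have hkey2 : ((2^(ℓ-1):ℕ):ℝ) * (((((ℓ-1)*2)^ℓ : ℕ):ℝ) * (U / (X*P))) ≤ U := by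
      have ht : ((2^(ℓ-1):ℕ):ℝ) * ((((ℓ-1)*2)^ℓ : ℕ):ℝ) ≤ X*P := by
        refine le_trans ?_ hnpM
        have hN : (2^(ℓ-1)) * (((ℓ-1)*2)^ℓ) ≤ M := by
          rw [hM]
          calc 2^(ℓ-1) * ((ℓ-1)*2)^ℓ ≤ 2^ℓ * ((ℓ-1)*2)^ℓ :=
              Nat.mul_le_mul_right _ (Nat.pow_le_pow_right (by norm_num) (by omega))
            _ ≤ 2 ^ ℓ * ((ℓ-1) * 2) ^ ℓ + 2*(ℓ-1)*(ℓ-3) := Nat.le_add_right _ _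
            _ ≤ 2 ^ ℓ * ((ℓ-1) * 2) ^ ℓ + 2*(ℓ-1)*(ℓ-3) + 4 := Nat.le_add_right _ 4
        calc ((2^(ℓ-1):ℕ):ℝ) * ((((ℓ-1)*2)^ℓ : ℕ):ℝ)
            = ((2^(ℓ-1) * (((ℓ-1)*2)^ℓ) : ℕ):ℝ) := by push_cast; ring
          _ ≤ (M:ℝ) := by exact_mod_cast hN
      have hrw : ((2^(ℓ-1):ℕ):ℝ) * (((((ℓ-1)*2)^ℓ : ℕ):ℝ) * (U / (X*P)))
          = (((2^(ℓ-1):ℕ):ℝ) * ((((ℓ-1)*2)^ℓ : ℕ):ℝ)) * U / (X*P) := by ring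
      rw [hrw, div_le_iff₀ hXP]
      calc (((2^(ℓ-1):ℕ):ℝ) * ((((ℓ-1)*2)^ℓ : ℕ):ℝ)) * U ≤ (X*P) * U :=
          mul_le_mul_of_nonneg_right ht hUpos.le
        _ = U * (X*P) := by ring
    have hfin : 2*(ℓ-1) + 2 ≤ 2^(ℓ-1) := two_mul_add_two_le_two_pow (ℓ-1) (by omega)
    have hcast : 2*((ℓ-1:ℕ):ℝ) + 2 ≤ (2:ℝ)^(ℓ-1) := by exact_mod_cast hfin
    have hrhs : (2:ℝ)^(ℓ-1) * X^(ℓ-2) * P^(ℓ-1) / (X*P) = ((2:ℝ)^(ℓ-1)) * U := by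
      have e1 : X^(ℓ-2) = X^(ℓ-3) * X := by rw [← pow_succ]; congr 1; omega
      have e2 : P^(ℓ-1) = P^(ℓ-2) * P := by rw [← pow_succ]; congr 1; omega
      rw [hU, e1, e2]
      field_simp
    rw [hrhs]
    have hB1U : ((ℓ-1:ℕ):ℝ) * B1
        = 2*((ℓ-1:ℕ):ℝ)*U + ((ℓ-1:ℕ):ℝ) * (2*((ℓ-3:ℕ):ℝ)*X^(ℓ-4)) * P^(ℓ-2) := by
      rw [hB1def, hU]; ring
    have hc2 : (2*((ℓ-1:ℕ):ℝ)+2)*U ≤ (2:ℝ)^(ℓ-1)*U :=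
      mul_le_mul_of_nonneg_right hcast hUpos.le
    rw [hB1U]
    nlinarith [hkey1, hkey2, hc2, hUpos.le]
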